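/- arXiv:2208.12307 — 8 statements merged into one kernel-verified Lean document; each statement's English description precedes it below -/
import Mathlib

section
/- Let r be a positive integer, w = (w₁, w₁', w₂, w₂') ∈ ℤ≥0⁴ and v = (v₁, v₂) ∈ ℤ≥0². Define v̄₁ = min(v₁, w₁', w₁ + r·v₂, w₁ + r·w₂) and v̄₂ = min(v₂, w₂, w₂' + r·v₁, w₂' + r·w₁'). Then v̄ = (v̄₁, v̄₂) satisfies v̄₁ ≤ v₁ and v̄₂ ≤ v₂, the pair (v̄, w) is l-dominant, and every v' = (v₁', v₂') ∈ ℤ≥0² with v₁' ≤ v₁, v₂' ≤ v₂ such that (v', w) is l-dominant satisfies v₁' ≤ v̄₁ and v₂' ≤ v̄₂. In other words, v̄ is the unique maximal element of {v' ∈ ℤ≥0² : v' ≤ v componentwise and (v', w) is l-dominant}. -/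
/-- The pair `(v, w)` with `v = (v₁, v₂)`, `w = (w₁, w₁', w₂, w₂')` is `l`-dominant:
`w₁ − v₁ + r·v₂ ≥ 0`, `w₁' − v₁ ≥ 0`, `w₂ − v₂ ≥ 0`, `w₂' − v₂ + r·v₁ ≥ 0`. -/
def LDominant (r w₁ w₁' w₂ w₂' v₁ v₂ : ℕ) : Prop :=
  v₁ ≤ w₁ + r * v₂ ∧ v₁ ≤ w₁' ∧ v₂ ≤ w₂ ∧ v₂ ≤ w₂' + r * v₁

theorem stmt_1 (r : ℕ) (hr : 0 < r) (w₁ w₁' w₂ w₂' v₁ v₂ : ℕ) :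
    min (min v₁ w₁') (min (w₁ + r * v₂) (w₁ + r * w₂)) ≤ v₁ ∧
    min (min v₂ w₂) (min (w₂' + r * v₁) (w₂' + r * w₁')) ≤ v₂ ∧
    LDominant r w₁ w₁' w₂ w₂'
      (min (min v₁ w₁') (min (w₁ + r * v₂) (w₁ + r * w₂)))
      (min (min v₂ w₂) (min (w₂' + r * v₁) (w₂' + r * w₁'))) ∧
    ∀ v₁' v₂' : ℕ, v₁' ≤ v₁ → v₂' ≤ v₂ → LDominant r w₁ w₁' w₂ w₂' v₁' v₂' →
      v₁' ≤ min (min v₁ w₁') (min (w₁ + r * v₂) (w₁ + r * w₂)) ∧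
      v₂' ≤ min (min v₂ w₂) (min (w₂' + r * v₁) (w₂' + r * w₁')) := by
  set A := min (min v₁ w₁') (min (w₁ + r * v₂) (w₁ + r * w₂)) with hAdef
  set B := min (min v₂ w₂) (min (w₂' + r * v₁) (w₂' + r * w₁')) with hBdef
  have hA1 : A ≤ v₁ := le_trans (min_le_left _ _) (min_le_left _ _)
  have hA2 : A ≤ w₁' := le_trans (min_le_left _ _) (min_le_right _ _)
  have hA3 : A ≤ w₁ + r * v₂ := le_trans (min_le_right _ _) (min_le_left _ _)
  have hA4 : A ≤ w₁ + r * w₂ := le_trans (min_le_right _ _) (min_le_right _ _)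
  have hB1 : B ≤ v₂ := le_trans (min_le_left _ _) (min_le_left _ _)
  have hB2 : B ≤ w₂ := le_trans (min_le_left _ _) (min_le_right _ _)
  have hB3 : B ≤ w₂' + r * v₁ := le_trans (min_le_right _ _) (min_le_left _ _)
  have hB4 : B ≤ w₂' + r * w₁' := le_trans (min_le_right _ _) (min_le_right _ _)
  have key1 : A ≤ w₁ + r * B := by
    rcases le_total (min v₂ w₂) (min (w₂' + r * v₁) (w₂' + r * w₁')) with h | h
    · rw [hBdef, min_eq_left h]
      rcases le_total v₂ w₂ with h2 | h2
      · rw [min_eq_left h2]; exact hA3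
      · rw [min_eq_right h2]; exact hA4
    · have hmm : min v₁ w₁' ≤ B := by
        rw [hBdef, min_eq_right h]
        calc min v₁ w₁' ≤ r * min v₁ w₁' := Nat.le_mul_of_pos_left _ hr
          _ ≤ w₂' + r * min v₁ w₁' := Nat.le_add_left _ _
          _ = min (w₂' + r * v₁) (w₂' + r * w₁') := by
              rw [← Nat.mul_min_mul_left, ← min_add_add_left]
      calc A ≤ min v₁ w₁' := min_le_left _ _
        _ ≤ B := hmm
        _ ≤ r * B := Nat.le_mul_of_pos_left _ hr
        _ ≤ w₁ + r * B := Nat.le_add_left _ _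
  have key2 : B ≤ w₂' + r * A := by
    rcases le_total (min v₁ w₁') (min (w₁ + r * v₂) (w₁ + r * w₂)) with h | h
    · rw [hAdef, min_eq_left h]
      rcases le_total v₁ w₁' with h2 | h2
      · rw [min_eq_left h2]; exact hB3
      · rw [min_eq_right h2]; exact hB4
    · have hmm : min v₂ w₂ ≤ A := by
        rw [hAdef, min_eq_right h]
        calc min v₂ w₂ ≤ r * min v₂ w₂ := Nat.le_mul_of_pos_left _ hr
          _ ≤ w₁ + r * min v₂ w₂ := Nat.le_add_left _ _
          _ = min (w₁ + r * v₂) (w₁ + r * w₂) := by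
              rw [← Nat.mul_min_mul_left, ← min_add_add_left]
      calc B ≤ min v₂ w₂ := min_le_left _ _
        _ ≤ A := hmm
        _ ≤ r * A := Nat.le_mul_of_pos_left _ hr
        _ ≤ w₂' + r * A := Nat.le_add_left _ _
  refine ⟨hA1, hB1, ⟨key1, hA2, hB2, key2⟩, ?_⟩
  rintro v₁' v₂' h₁ h₂ ⟨d1, d2, d3, d4⟩
  constructor
  · exact le_min (le_min h₁ d2)
      (le_min (d1.trans (Nat.add_le_add_left (Nat.mul_le_mul_left r h₂) _))
        (d1.trans (Nat.add_le_add_left (Nat.mul_le_mul_left r d3) _)))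
  · exact le_min (le_min h₂ d3)
      (le_min (d4.trans (Nat.add_le_add_left (Nat.mul_le_mul_left r h₁) _))
        (d4.trans (Nat.add_le_add_left (Nat.mul_le_mul_left r d2) _)))
end

section
/- Let r be a positive integer, w = (w₁, w₁', w₂, w₂') ∈ ℤ≥0⁴ and v = (v₁, v₂) ∈ ℤ≥0². There exists a tuple (x₁, x₂, y₁, …, y_r) ∈ E_w with rank A = v₁ and rank B = v₂ if and only if (v, w) is l-dominant, i.e. if and only if w₁ − v₁ + r·v₂ ≥ 0, w₁' − v₁ ≥ 0, w₂ − v₂ ≥ 0 and w₂' − v₂ + r·v₁ ≥ 0. -/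
open Matrix

noncomputable section

/-- The space `E_w` of tuples `(x₁, x₂, y₁, …, y_r)` of complex matrices, where `x₁` has size
`w₁'×w₁`, `x₂` has size `w₂'×w₂`, and each `y_h` has size `w₁'×w₂`. -/
abbrev EW (r w₁ w₁' w₂ w₂' : ℕ) : Type :=
  Matrix (Fin w₁') (Fin w₁) ℂ × Matrix (Fin w₂') (Fin w₂) ℂ ×
    (Fin r → Matrix (Fin w₁') (Fin w₂) ℂ)

/-- The horizontally concatenated block matrix `A = [x₁ y₁ ⋯ y_r]`. -/
def matA {r m a b : ℕ} (x₁ : Matrix (Fin m) (Fin a) ℂ)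
    (y : Fin r → Matrix (Fin m) (Fin b) ℂ) :
    Matrix (Fin m) (Fin a ⊕ Fin r × Fin b) ℂ :=
  Matrix.of fun i => Sum.elim (fun j => x₁ i j) (fun p => y p.1 i p.2)

/-- The vertically stacked block matrix `B = [x₂; y₁; ⋯; y_r]`. -/
def matB {r n a b : ℕ} (x₂ : Matrix (Fin a) (Fin n) ℂ)
    (y : Fin r → Matrix (Fin b) (Fin n) ℂ) :
    Matrix (Fin a ⊕ Fin r × Fin b) (Fin n) ℂ :=
  Matrix.of fun i j => Sum.elim (fun i₂ => x₂ i₂ j) (fun p => y p.1 p.2 j) i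

/-- The subspace `ℂ^{w₂'} × X₁^{×r}` of `ℂ^{w₂'} × (ℂ^{w₁'})^r`: all tuples `(a, u₁, …, u_r)`
whose last `r` components `u_h` all lie in `X₁`. -/
def prodSub (r w₂' w₁' : ℕ) (X₁ : Submodule ℂ (Fin w₁' → ℂ)) :
    Submodule ℂ (Fin w₂' ⊕ Fin r × Fin w₁' → ℂ) :=
  ⨅ h : Fin r, X₁.comap (LinearMap.funLeft ℂ ℂ fun i => Sum.inr (h, i))

open Submodule Module


private lemma myrank_add_le {m n : Type*} [Fintype m] [Fintype n]
    (A B : Matrix m n ℂ) : (A + B).rank ≤ A.rank + B.rank := by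
  have hr : LinearMap.range (A + B).mulVecLin ≤
      LinearMap.range A.mulVecLin ⊔ LinearMap.range B.mulVecLin := by
    rw [Matrix.mulVecLin_add]
    rintro x ⟨v, rfl⟩
    exact Submodule.mem_sup.2 ⟨A.mulVecLin v, ⟨v, rfl⟩, B.mulVecLin v, ⟨v, rfl⟩, rfl⟩
  have h1 := Submodule.finrank_mono (R := ℂ) hr
  have h2 := Submodule.finrank_sup_add_finrank_inf_eq
    (LinearMap.range A.mulVecLin) (LinearMap.range B.mulVecLin)
  unfold Matrix.rank
  omega

private lemma myrank_sum_le {m n ι : Type*} [Fintype m] [Fintype n] (s : Finset ι)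
    (f : ι → Matrix m n ℂ) : (∑ h ∈ s, f h).rank ≤ ∑ h ∈ s, (f h).rank := by
  classical
  induction s using Finset.cons_induction with
  | empty => simp [Matrix.rank_zero]
  | cons a s ha ih =>
      rw [Finset.sum_cons, Finset.sum_cons]
      exact le_trans (myrank_add_le _ _) (by omega)

private lemma finrank_span_single (p v : ℕ) (hv : v ≤ p) :
    finrank ℂ (span ℂ (Set.range fun k : Fin v => (Pi.single (Fin.castLE hv k) 1 : Fin p → ℂ))) = v := by
  have hli : LinearIndependent ℂ (fun k : Fin v => (Pi.single (Fin.castLE hv k) 1 : Fin p → ℂ)) := by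
    have h1 := (Pi.basisFun ℂ (Fin p)).linearIndependent
    have h2 := h1.comp (Fin.castLE hv) (Fin.castLE_injective hv)
    simpa [Function.comp_def, Pi.basisFun_apply] using h2
  simpa using finrank_span_eq_card hli

open scoped Classical in
private lemma rank_gen (p q nX r a b v₁ v₂ m L : ℕ)
    (hv₁p : v₁ ≤ p) (hanX : a ≤ nX) (hav : a ≤ v₁)
    (hcm : v₁ - a ≤ m) (hmL : m ≤ r * L) (hL1 : L ≤ v₁) (hL2 : L ≤ v₂) (hv₂q : v₂ ≤ q)
    (M : Matrix (Fin p) (Fin nX ⊕ Fin r × Fin q) ℂ)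
    (hMl : ∀ i t, M i (Sum.inl t) = if (i : ℕ) = (t : ℕ) ∧ (t : ℕ) < a then 1 else 0)
    (hMr : ∀ i h j, M i (Sum.inr (h, j)) =
      if ∃ k, k < m ∧ k / L = (h : ℕ) ∧ (a + k) % v₁ = (i : ℕ) ∧ (b + k) % v₂ = (j : ℕ)
      then 1 else 0) :
    M.rank = v₁ := by
  have U0 : ∀ k k', k ≤ k' → k' < m → k / L = k' / L →
      (b + k) % v₂ = (b + k') % v₂ → k = k' := by
    intro k k' hle hk' hdiv hmod
    have hLpos : 0 < L := by
      rcases Nat.eq_zero_or_pos L with rfl | h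
      · simp at hmL; omega
      · exact h
    have h1 : k' - k < L := by
      have h2 : k' / L < k / L + 1 := by omega
      have h3 : k' < (k / L + 1) * L := by
        rw [← Nat.div_lt_iff_lt_mul hLpos]; exact h2
      have h4 : (k / L) * L ≤ k := Nat.div_mul_le_self k L
      have h5 : (k / L + 1) * L = (k / L) * L + L := by ring
      omega
    have hdvd : v₂ ∣ (b + k') - (b + k) := (Nat.modEq_iff_dvd' (by omega)).1 hmod
    have hdvd' : v₂ ∣ k' - k := by simpa [Nat.add_sub_add_left] using hdvd
    have hlt : k' - k < v₂ := lt_of_lt_of_le h1 hL2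
    have := Nat.eq_zero_of_dvd_of_lt hdvd' hlt
    · omega
  have U : ∀ k k', k < m → k' < m → k / L = k' / L →
      (b + k) % v₂ = (b + k') % v₂ → k = k' := by
    intro k k' hk hk' hdiv hmod
    rcases le_total k k' with h | h
    · exact U0 k k' h hk' hdiv hmod
    · exact (U0 k' k h hk hdiv.symm hmod.symm).symm
  rw [Matrix.rank_eq_finrank_span_cols]
  have hspan : span ℂ (Set.range Mᵀ) =
      span ℂ (Set.range fun k : Fin v₁ => (Pi.single (Fin.castLE hv₁p k) 1 : Fin p → ℂ)) := by
    apply le_antisymm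
    · rw [Submodule.span_le]
      rintro _ ⟨c, rfl⟩
      match c with
      | Sum.inl t =>
        by_cases ht : (t : ℕ) < a
        · have heq : Mᵀ (Sum.inl t) =
              (Pi.single (Fin.castLE hv₁p ⟨(t : ℕ), lt_of_lt_of_le ht hav⟩) 1 : Fin p → ℂ) := by
            funext i
            rw [Matrix.transpose_apply, hMl, Pi.single_apply]
            have hiff : ((i : ℕ) = (t : ℕ) ∧ (t : ℕ) < a) ↔
                i = Fin.castLE hv₁p ⟨(t : ℕ), lt_of_lt_of_le ht hav⟩ := by
              simp [Fin.ext_iff, ht]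
            rw [if_congr hiff rfl rfl]
          rw [heq]
          exact subset_span ⟨_, rfl⟩
        · have heq : Mᵀ (Sum.inl t) = 0 := by
            funext i
            rw [Matrix.transpose_apply, hMl, Pi.zero_apply, if_neg (by tauto)]
          rw [heq]; exact zero_mem _
      | Sum.inr ⟨h, j⟩ =>
        by_cases hex : ∃ k, k < m ∧ k / L = (h : ℕ) ∧ (b + k) % v₂ = (j : ℕ)
        · obtain ⟨k₀, hk₀m, hk₀d, hk₀j⟩ := hex
          have hLpos : 0 < L := by
            rcases Nat.eq_zero_or_pos L with rfl | hh
            · simp at hmL; omega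
            · exact hh
          have v₁pos : 0 < v₁ := lt_of_lt_of_le hLpos hL1
          set i₀ : Fin p := ⟨(a + k₀) % v₁, lt_of_lt_of_le (Nat.mod_lt _ v₁pos) hv₁p⟩ with hi₀
          have heq : Mᵀ (Sum.inr (h, j)) = (Pi.single i₀ 1 : Fin p → ℂ) := by
            funext i
            rw [Matrix.transpose_apply, hMr, Pi.single_apply]
            have hiff : (∃ k, k < m ∧ k / L = (h : ℕ) ∧ (a + k) % v₁ = (i : ℕ) ∧
                (b + k) % v₂ = (j : ℕ)) ↔ i = i₀ := by
              constructor
              · rintro ⟨k, hkm, hkd, hki, hkj⟩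
                have hkk : k = k₀ := U k k₀ hkm hk₀m (hkd.trans hk₀d.symm) (hkj.trans hk₀j.symm)
                subst hkk
                exact Fin.ext (by simp [hi₀, ← hki])
              · rintro rfl
                exact ⟨k₀, hk₀m, hk₀d, rfl, hk₀j⟩
            rw [if_congr hiff rfl rfl]
          rw [heq]
          have : i₀ = Fin.castLE hv₁p ⟨(a + k₀) % v₁, Nat.mod_lt _ v₁pos⟩ := Fin.ext rfl
          rw [this]
          exact subset_span ⟨_, rfl⟩
        · have heq : Mᵀ (Sum.inr (h, j)) = 0 := by
            funext i
            rw [Matrix.transpose_apply, hMr, Pi.zero_apply, if_neg]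
            rintro ⟨k, h1, h2, h3, h4⟩
            exact hex ⟨k, h1, h2, h4⟩
          rw [heq]; exact zero_mem _
    · rw [Submodule.span_le]
      rintro _ ⟨k, rfl⟩
      by_cases hk : (k : ℕ) < a
      · have heq : (Pi.single (Fin.castLE hv₁p k) 1 : Fin p → ℂ) =
            Mᵀ (Sum.inl ⟨(k : ℕ), lt_of_lt_of_le hk hanX⟩) := by
          funext i
          rw [Matrix.transpose_apply, hMl, Pi.single_apply]
          have hiff : (i = Fin.castLE hv₁p k) ↔
              ((i : ℕ) = (k : ℕ) ∧ (k : ℕ) < a) := by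
            simp [Fin.ext_iff, hk]
          rw [if_congr hiff rfl rfl]
        exact Set.mem_of_eq_of_mem heq (subset_span ⟨_, rfl⟩)
      · push_neg at hk
        have hk'v : (k : ℕ) - a < v₁ - a := by omega
        have hk'm : (k : ℕ) - a < m := lt_of_lt_of_le hk'v hcm
        have hLpos : 0 < L := by
          rcases Nat.eq_zero_or_pos L with rfl | hh
          · simp at hmL; omega
          · exact hh
        have v₁pos : 0 < v₁ := lt_of_lt_of_le hLpos hL1
        have v₂pos : 0 < v₂ := lt_of_lt_of_le hLpos hL2
        set k' : ℕ := (k : ℕ) - a with hk'def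
        have heq : (Pi.single (Fin.castLE hv₁p k) 1 : Fin p → ℂ) =
            Mᵀ (Sum.inr (⟨k' / L, by rw [Nat.div_lt_iff_lt_mul hLpos]; exact lt_of_lt_of_le hk'm hmL⟩,
              ⟨(b + k') % v₂, lt_of_lt_of_le (Nat.mod_lt _ v₂pos) hv₂q⟩)) := by
          funext i
          rw [Matrix.transpose_apply, hMr, Pi.single_apply]
          have hak : a + k' = (k : ℕ) := by omega
          have hiff : (i = Fin.castLE hv₁p k) ↔
              (∃ kk, kk < m ∧ kk / L = k' / L ∧ (a + kk) % v₁ = (i : ℕ) ∧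
                (b + kk) % v₂ = (b + k') % v₂) := by
            constructor
            · rintro rfl
              refine ⟨k', hk'm, rfl, ?_, rfl⟩
              rw [hak, Nat.mod_eq_of_lt k.isLt]
              simp
            · rintro ⟨kk, h1, h2, h3, h4⟩
              have hkk : kk = k' := U kk k' h1 hk'm h2 h4
              subst hkk
              refine Fin.ext ?_
              simp only [Fin.coe_castLE]
              rw [← h3, hak, Nat.mod_eq_of_lt k.isLt]
          rw [if_congr hiff rfl rfl]
        exact Set.mem_of_eq_of_mem heq (subset_span ⟨_, rfl⟩)
  change finrank ℂ (span ℂ (Set.range Mᵀ)) = v₁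
  rw [hspan]
  have := finrank_span_eq_card (R := ℂ)
    (b := fun k : Fin v₁ => (Pi.single (Fin.castLE hv₁p k) 1 : Fin p → ℂ)) ?_
  · simpa using this
  · have h1 := (Pi.basisFun ℂ (Fin p)).linearIndependent
    have h2 := h1.comp (Fin.castLE hv₁p) (Fin.castLE_injective hv₁p)
    simpa [Function.comp_def, Pi.basisFun_apply] using h2

private lemma forward (r w₁ w₁' w₂ w₂' : ℕ)
    (x₁ : Matrix (Fin w₁') (Fin w₁) ℂ) (x₂ : Matrix (Fin w₂') (Fin w₂) ℂ)
    (y : Fin r → Matrix (Fin w₁') (Fin w₂) ℂ) :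
    (matA x₁ y).rank ≤ w₁ + r * (matB x₂ y).rank ∧ (matA x₁ y).rank ≤ w₁' ∧
      (matB x₂ y).rank ≤ w₂ ∧ (matB x₂ y).rank ≤ w₂' + r * (matA x₁ y).rank := by
  classical
  have hyB : ∀ h, (y h).rank ≤ (matB x₂ y).rank := by
    intro h
    have he : y h = (Matrix.of fun i c => if c = Sum.inr (h, i) then (1:ℂ) else 0 : Matrix (Fin w₁') (Fin w₂' ⊕ Fin r × Fin w₁') ℂ) * matB x₂ y := by
      ext i j
      simp [Matrix.mul_apply, ite_mul, Finset.sum_ite_eq', matB]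
    rw [he]
    exact Matrix.rank_mul_le_right _ _
  have hyA : ∀ h, (y h).rank ≤ (matA x₁ y).rank := by
    intro h
    have he : y h = matA x₁ y * (Matrix.of fun c j => if c = Sum.inr (h, j) then (1:ℂ) else 0 : Matrix (Fin w₁ ⊕ Fin r × Fin w₂) (Fin w₂) ℂ) := by
      ext i j
      simp [Matrix.mul_apply, mul_ite, Finset.sum_ite_eq, matA]
    rw [he]
    exact Matrix.rank_mul_le_left _ _
  have hA : matA x₁ y = x₁ * (Matrix.of fun t c => if c = Sum.inl t then (1:ℂ) else 0 : Matrix (Fin w₁) (Fin w₁ ⊕ Fin r × Fin w₂) ℂ)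
      + ∑ h : Fin r, (y h) * (Matrix.of fun j c => if c = Sum.inr (h, j) then (1:ℂ) else 0 : Matrix (Fin w₂) (Fin w₁ ⊕ Fin r × Fin w₂) ℂ) := by
    ext i c
    rcases c with t | ⟨h, j⟩
    · simp [Matrix.add_apply, Matrix.sum_apply, Matrix.mul_apply, mul_ite,
        Finset.sum_ite_eq, matA]
    · simp only [Matrix.add_apply, Matrix.sum_apply, Matrix.mul_apply, Matrix.of_apply,
        mul_ite, mul_one, mul_zero, matA, Sum.elim_inr, reduceCtorEq, Sum.inr.injEq,
        Prod.mk.injEq, if_false, Finset.sum_const_zero, zero_add]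
      have inner : ∀ x : Fin r, (∑ x1 : Fin w₂, if h = x ∧ j = x1 then y x i x1 else 0)
          = if h = x then y h i j else 0 := by
        intro x
        by_cases hx : h = x
        · subst hx; simp [Finset.sum_ite_eq]
        · simp [hx]
      rw [Finset.sum_congr rfl (fun x _ => inner x), Finset.sum_ite_eq]
      simp
  have hB : matB x₂ y = (Matrix.of fun c i => if c = Sum.inl i then (1:ℂ) else 0 : Matrix (Fin w₂' ⊕ Fin r × Fin w₁') (Fin w₂') ℂ) * x₂
      + ∑ h : Fin r, (Matrix.of fun c i => if c = Sum.inr (h, i) then (1:ℂ) else 0 : Matrix (Fin w₂' ⊕ Fin r × Fin w₁') (Fin w₁') ℂ) * (y h) := by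
    ext c j
    rcases c with t | ⟨h, i⟩
    · simp [Matrix.add_apply, Matrix.sum_apply, Matrix.mul_apply, ite_mul,
        Finset.sum_ite_eq', matB]
    · simp only [Matrix.add_apply, Matrix.sum_apply, Matrix.mul_apply, Matrix.of_apply,
        ite_mul, one_mul, zero_mul, matB, Sum.elim_inr, reduceCtorEq, Sum.inr.injEq,
        Prod.mk.injEq, if_false, Finset.sum_const_zero, zero_add]
      have inner : ∀ x : Fin r, (∑ x1 : Fin w₁', if h = x ∧ i = x1 then y x x1 j else 0)
          = if h = x then y h i j else 0 := by
        intro x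
        by_cases hx : h = x
        · subst hx; simp [Finset.sum_ite_eq]
        · simp [hx]
      rw [Finset.sum_congr rfl (fun x _ => inner x), Finset.sum_ite_eq]
      simp
  have hrA : (matA x₁ y).rank ≤ w₁ + r * (matB x₂ y).rank := by
    have s1 : (matA x₁ y).rank ≤
        (x₁ * ((Matrix.of fun t c => if c = Sum.inl t then (1:ℂ) else 0 : Matrix (Fin w₁) (Fin w₁ ⊕ Fin r × Fin w₂) ℂ))).rank
        + (∑ h : Fin r,
            (y h) * ((Matrix.of fun j c => if c = Sum.inr (h, j) then (1:ℂ) else 0 : Matrix (Fin w₂) (Fin w₁ ⊕ Fin r × Fin w₂) ℂ))).rank := by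
      rw [hA]; exact myrank_add_le _ _
    have s2 := myrank_sum_le Finset.univ
      (fun h : Fin r => (y h) * ((Matrix.of fun j c => if c = Sum.inr (h, j) then (1:ℂ) else 0 : Matrix (Fin w₂) (Fin w₁ ⊕ Fin r × Fin w₂) ℂ)))
    have s3 : ∀ h : Fin r,
        ((y h) * ((Matrix.of fun j c => if c = Sum.inr (h, j) then (1:ℂ) else 0 : Matrix (Fin w₂) (Fin w₁ ⊕ Fin r × Fin w₂) ℂ))).rank
          ≤ (matB x₂ y).rank := fun h => le_trans (Matrix.rank_mul_le_left _ _) (hyB h)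
    have s4 := Finset.sum_le_sum (fun h (_ : h ∈ Finset.univ) => s3 h)
    have s5 : (x₁ * ((Matrix.of fun t c => if c = Sum.inl t then (1:ℂ) else 0 : Matrix (Fin w₁) (Fin w₁ ⊕ Fin r × Fin w₂) ℂ))).rank ≤ w₁ :=
      le_trans (Matrix.rank_mul_le_left _ _) (by simpa using x₁.rank_le_card_width)
    have s6 : (∑ _h : Fin r, (matB x₂ y).rank) = r * (matB x₂ y).rank := by
      simp [Finset.sum_const, mul_comm]
    omega
  have hrB : (matB x₂ y).rank ≤ w₂' + r * (matA x₁ y).rank := by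
    have s1 : (matB x₂ y).rank ≤
        (((Matrix.of fun c i => if c = Sum.inl i then (1:ℂ) else 0 : Matrix (Fin w₂' ⊕ Fin r × Fin w₁') (Fin w₂') ℂ)) * x₂).rank
        + (∑ h : Fin r,
            ((Matrix.of fun c i => if c = Sum.inr (h, i) then (1:ℂ) else 0 : Matrix (Fin w₂' ⊕ Fin r × Fin w₁') (Fin w₁') ℂ)) * (y h)).rank := by
      rw [hB]; exact myrank_add_le _ _
    have s2 := myrank_sum_le Finset.univ
      (fun h : Fin r => ((Matrix.of fun c i => if c = Sum.inr (h, i) then (1:ℂ) else 0 : Matrix (Fin w₂' ⊕ Fin r × Fin w₁') (Fin w₁') ℂ)) * (y h))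
    have s3 : ∀ h : Fin r,
        (((Matrix.of fun c i => if c = Sum.inr (h, i) then (1:ℂ) else 0 : Matrix (Fin w₂' ⊕ Fin r × Fin w₁') (Fin w₁') ℂ)) * (y h)).rank
          ≤ (matA x₁ y).rank := fun h => le_trans (Matrix.rank_mul_le_right _ _) (hyA h)
    have s4 := Finset.sum_le_sum (fun h (_ : h ∈ Finset.univ) => s3 h)
    have s5 : (((Matrix.of fun c i => if c = Sum.inl i then (1:ℂ) else 0 : Matrix (Fin w₂' ⊕ Fin r × Fin w₁') (Fin w₂') ℂ)) * x₂).rank ≤ w₂' :=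
      le_trans (Matrix.rank_mul_le_right _ _) (by simpa using x₂.rank_le_card_height)
    have s6 : (∑ _h : Fin r, (matA x₁ y).rank) = r * (matA x₁ y).rank := by
      simp [Finset.sum_const, mul_comm]
    omega
  refine ⟨hrA, ?_, ?_, hrB⟩
  · simpa using (matA x₁ y).rank_le_card_height
  · simpa using (matB x₂ y).rank_le_card_width

private lemma construct (r w₁ w₁' w₂ w₂' v₁ v₂ : ℕ) (hr : 0 < r)
    (h1 : v₁ ≤ w₁ + r * v₂) (h2 : v₁ ≤ w₁') (h3 : v₂ ≤ w₂) (h4 : v₂ ≤ w₂' + r * v₁) :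
    ∃ p : EW r w₁ w₁' w₂ w₂',
        (matA p.1 p.2.2).rank = v₁ ∧ (matB p.2.1 p.2.2).rank = v₂ := by
  classical
  set a := min v₁ w₁ with ha
  set b := min v₂ w₂' with hb
  set L := min v₁ v₂ with hL
  set m := max (v₁ - a) (v₂ - b) with hm
  have hmL : m ≤ r * L := by
    have hc₁ : v₁ - a ≤ r * L := by
      rcases min_le_iff.1 (le_refl L) with _ | _
      all_goals {
        rcases Nat.le_total v₁ v₂ with hv | hv
        · have hLe : L = v₁ := by omega
          have : v₁ - a ≤ v₁ := by omega
          calc v₁ - a ≤ v₁ := this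
            _ ≤ r * v₁ := Nat.le_mul_of_pos_left _ hr
            _ = r * L := by rw [hLe]
        · have hLe : L = v₂ := by omega
          have : v₁ - a ≤ r * v₂ := by omega
          calc v₁ - a ≤ r * v₂ := this
            _ = r * L := by rw [hLe] }
    have hc₂ : v₂ - b ≤ r * L := by
      rcases Nat.le_total v₁ v₂ with hv | hv
      · have hLe : L = v₁ := by omega
        have : v₂ - b ≤ r * v₁ := by omega
        calc v₂ - b ≤ r * v₁ := this
          _ = r * L := by rw [hLe]
      · have hLe : L = v₂ := by omega
        have : v₂ - b ≤ v₂ := by omega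
        calc v₂ - b ≤ v₂ := this
          _ ≤ r * v₂ := Nat.le_mul_of_pos_left _ hr
          _ = r * L := by rw [hLe]
    omega
  refine ⟨⟨Matrix.of fun i t => if (i : ℕ) = (t : ℕ) ∧ (t : ℕ) < a then (1:ℂ) else 0,
          Matrix.of fun i j => if (j : ℕ) = (i : ℕ) ∧ (i : ℕ) < b then (1:ℂ) else 0,
          fun h => Matrix.of fun i j =>
            if ∃ k, k < m ∧ k / L = (h : ℕ) ∧ (a + k) % v₁ = (i : ℕ) ∧
                (b + k) % v₂ = (j : ℕ)
            then (1:ℂ) else 0⟩, ?_, ?_⟩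
  · exact rank_gen w₁' w₂ w₁ r a b v₁ v₂ m L h2 (min_le_right _ _) (min_le_left _ _)
      (le_max_left _ _) hmL (min_le_left _ _) (min_le_right _ _) h3 _
      (fun i t => rfl) (fun i h j => rfl)
  · rw [← Matrix.rank_transpose]
    refine rank_gen w₂ w₁' w₂' r b a v₂ v₁ m L h3 (min_le_right _ _) (min_le_left _ _)
      (le_max_right _ _) hmL (min_le_right _ _) (min_le_left _ _) h2 _
      (fun j i => rfl) (fun j h i => ?_)
    show (if ∃ k, k < m ∧ k / L = (h : ℕ) ∧ (a + k) % v₁ = (i : ℕ) ∧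
        (b + k) % v₂ = (j : ℕ) then (1:ℂ) else 0) = _
    have hiff : (∃ k, k < m ∧ k / L = (h : ℕ) ∧ (a + k) % v₁ = (i : ℕ) ∧
        (b + k) % v₂ = (j : ℕ)) ↔ (∃ k, k < m ∧ k / L = (h : ℕ) ∧
        (b + k) % v₂ = (j : ℕ) ∧ (a + k) % v₁ = (i : ℕ)) := by
      constructor
      · rintro ⟨k, u1, u2, u3, u4⟩; exact ⟨k, u1, u2, u4, u3⟩
      · rintro ⟨k, u1, u2, u3, u4⟩; exact ⟨k, u1, u2, u4, u3⟩
    rw [if_congr hiff rfl rfl]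

theorem stmt_3 (r w₁ w₁' w₂ w₂' v₁ v₂ : ℕ) (hr : 0 < r) :
    (∃ p : EW r w₁ w₁' w₂ w₂',
        (matA p.1 p.2.2).rank = v₁ ∧ (matB p.2.1 p.2.2).rank = v₂) ↔
    (v₁ ≤ w₁ + r * v₂ ∧ v₁ ≤ w₁' ∧ v₂ ≤ w₂ ∧ v₂ ≤ w₂' + r * v₁) := by
  constructor
  · rintro ⟨⟨x₁, x₂, y⟩, hA, hB⟩
    have hf := forward r w₁ w₁' w₂ w₂' x₁ x₂ y
    rw [hA, hB] at hf
    exact ⟨hf.1, hf.2.1, hf.2.2.1, hf.2.2.2⟩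
  · rintro ⟨h1, h2, h3, h4⟩
    exact construct r w₁ w₁' w₂ w₂' v₁ v₂ hr h1 h2 h3 h4
end
end

section
/- Let r be a positive integer, w = (w₁, w₁', w₂, w₂') ∈ ℤ≥0⁴ and v = (v₁, v₂) ∈ ℤ≥0². Set v̄₁ = min(v₁, w₁', w₁ + r·v₂, w₁ + r·w₂) and v̄₂ = min(v₂, w₂, w₂' + r·v₁, w₂' + r·w₁'). Then E_{v,w} = E_{v̄,w}, i.e. for every tuple (x₁, x₂, y₁, …, y_r) ∈ E_w one has (rank A ≤ v₁ and rank B ≤ v₂) if and only if (rank A ≤ v̄₁ and rank B ≤ v̄₂). -/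
open Matrix

noncomputable section

open Module Submodule in
lemma finrank_finset_sup_le {ι V : Type*} [AddCommGroup V] [Module ℂ V]
    [FiniteDimensional ℂ V] (T : ι → Submodule ℂ V) (s : Finset ι) :
    finrank ℂ ↥(s.sup T) ≤ ∑ i ∈ s, finrank ℂ ↥(T i) := by
  classical
  induction s using Finset.induction_on with
  | empty => simp
  | insert _ _ hnotmem ih =>
    rw [Finset.sup_insert, Finset.sum_insert hnotmem]
    exact (Submodule.finrank_add_le_finrank_add_finrank _ _).trans (by omega)

lemma matB_transpose {r n a b : ℕ} (x : Matrix (Fin a) (Fin n) ℂ)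
    (y : Fin r → Matrix (Fin b) (Fin n) ℂ) :
    (matB x y)ᵀ = matA xᵀ (fun h => (y h)ᵀ) := by
  ext i j
  cases j <;> rfl

lemma rank_y_le_rank_matB {r n a b : ℕ} (x : Matrix (Fin a) (Fin n) ℂ)
    (y : Fin r → Matrix (Fin b) (Fin n) ℂ) (h : Fin r) :
    (y h).rank ≤ (matB x y).rank := by
  have key : (y h).mulVecLin =
      (LinearMap.funLeft ℂ ℂ (fun i : Fin b => Sum.inr (h, i))).comp (matB x y).mulVecLin := by
    apply LinearMap.ext; intro v; funext i
    simp [matB, mulVecLin_apply, mulVec, dotProduct]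
  rw [Matrix.rank, Matrix.rank, key, LinearMap.range_comp]
  exact Submodule.finrank_map_le _ _

lemma rank_y_le_rank_matA {r m a b : ℕ} (x : Matrix (Fin m) (Fin a) ℂ)
    (y : Fin r → Matrix (Fin m) (Fin b) ℂ) (h : Fin r) :
    (y h).rank ≤ (matA x y).rank := by
  have h1 : ((y h)ᵀ).rank = (y h).rank := rank_transpose _
  have h2 : ((y h)ᵀ).rank ≤ (matB xᵀ fun k => (y k)ᵀ).rank :=
    rank_y_le_rank_matB xᵀ (fun k => (y k)ᵀ) h
  have h3 : ((matB xᵀ fun k => (y k)ᵀ)ᵀ).rank = (matB xᵀ fun k => (y k)ᵀ).rank :=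
    rank_transpose _
  have h4 : (matB xᵀ fun k => (y k)ᵀ)ᵀ = matA x y := by
    rw [matB_transpose]; simp only [transpose_transpose]
  rw [h4] at h3
  omega

open Module in
lemma rank_matA_le {r m a b : ℕ} (x : Matrix (Fin m) (Fin a) ℂ)
    (y : Fin r → Matrix (Fin m) (Fin b) ℂ) :
    (matA x y).rank ≤ x.rank + ∑ h, (y h).rank := by
  classical
  have hle : LinearMap.range (matA x y).mulVecLin ≤
      LinearMap.range x.mulVecLin ⊔ ⨆ h, LinearMap.range (y h).mulVecLin := by
    rintro _ ⟨v, rfl⟩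
    have hdecomp : (matA x y).mulVecLin v =
        x.mulVecLin (fun j => v (Sum.inl j)) +
          ∑ h, (y h).mulVecLin (fun j => v (Sum.inr (h, j))) := by
      funext i
      simp only [mulVecLin_apply, mulVec, dotProduct, Fintype.sum_sum_type,
        Fintype.sum_prod_type, Finset.sum_apply, Pi.add_apply, matA, of_apply,
        Sum.elim_inl, Sum.elim_inr]
    rw [hdecomp]
    exact Submodule.add_mem_sup (LinearMap.mem_range_self _ _)
      (Submodule.sum_mem _ fun h _ =>
        Submodule.mem_iSup_of_mem h (LinearMap.mem_range_self _ _))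
  calc (matA x y).rank ≤ finrank ℂ ↥(LinearMap.range x.mulVecLin ⊔
        ⨆ h, LinearMap.range (y h).mulVecLin) := Submodule.finrank_mono hle
    _ ≤ finrank ℂ ↥(LinearMap.range x.mulVecLin) +
        finrank ℂ ↥(⨆ h, LinearMap.range (y h).mulVecLin) :=
      Submodule.finrank_add_le_finrank_add_finrank _ _
    _ ≤ x.rank + ∑ h, (y h).rank := by
      refine add_le_add le_rfl ?_
      rw [← Finset.sup_univ_eq_iSup]
      exact finrank_finset_sup_le _ _

lemma rank_matB_le {r n a b : ℕ} (x : Matrix (Fin a) (Fin n) ℂ)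
    (y : Fin r → Matrix (Fin b) (Fin n) ℂ) :
    (matB x y).rank ≤ x.rank + ∑ h, (y h).rank := by
  have h1 : (matB x y).rank = (matA xᵀ fun h => (y h)ᵀ).rank := by
    rw [← matB_transpose, rank_transpose]
  rw [h1]
  refine (rank_matA_le _ _).trans ?_
  simp [rank_transpose]

theorem stmt_4 (r w₁ w₁' w₂ w₂' v₁ v₂ : ℕ) (hr : 0 < r)
    (p : EW r w₁ w₁' w₂ w₂') :
    ((matA p.1 p.2.2).rank ≤ v₁ ∧ (matB p.2.1 p.2.2).rank ≤ v₂) ↔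
    ((matA p.1 p.2.2).rank ≤ min (min v₁ w₁') (min (w₁ + r * v₂) (w₁ + r * w₂)) ∧
      (matB p.2.1 p.2.2).rank ≤ min (min v₂ w₂) (min (w₂' + r * v₁) (w₂' + r * w₁'))) := by
  constructor
  · rintro ⟨hA, hB⟩
    have hyB : ∀ h, (p.2.2 h).rank ≤ v₂ := fun h => (rank_y_le_rank_matB _ _ h).trans hB
    have hyA : ∀ h, (p.2.2 h).rank ≤ v₁ := fun h => (rank_y_le_rank_matA _ _ h).trans hA
    have hsumB : ∑ h, (p.2.2 h).rank ≤ r * v₂ := by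
      calc ∑ h, (p.2.2 h).rank ≤ ∑ _h : Fin r, v₂ := Finset.sum_le_sum fun h _ => hyB h
        _ = r * v₂ := by simp [Finset.sum_const, mul_comm]
    have hsumA : ∑ h, (p.2.2 h).rank ≤ r * v₁ := by
      calc ∑ h, (p.2.2 h).rank ≤ ∑ _h : Fin r, v₁ := Finset.sum_le_sum fun h _ => hyA h
        _ = r * v₁ := by simp [Finset.sum_const, mul_comm]
    have hAcard : (matA p.1 p.2.2).rank ≤ w₁' := by
      simpa using (matA p.1 p.2.2).rank_le_card_height
    have hAwidth : (matA p.1 p.2.2).rank ≤ w₁ + r * w₂ := by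
      simpa using (matA p.1 p.2.2).rank_le_card_width
    have hx1 : p.1.rank ≤ w₁ := by simpa using p.1.rank_le_card_width
    have hA2 : (matA p.1 p.2.2).rank ≤ w₁ + r * v₂ :=
      (rank_matA_le _ _).trans (by omega)
    have hBcard : (matB p.2.1 p.2.2).rank ≤ w₂ := by
      simpa using (matB p.2.1 p.2.2).rank_le_card_width
    have hBheight : (matB p.2.1 p.2.2).rank ≤ w₂' + r * w₁' := by
      simpa using (matB p.2.1 p.2.2).rank_le_card_height
    have hx2 : p.2.1.rank ≤ w₂' := by simpa using p.2.1.rank_le_card_height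
    have hB2 : (matB p.2.1 p.2.2).rank ≤ w₂' + r * v₁ :=
      (rank_matB_le _ _).trans (by omega)
    exact ⟨le_min (le_min hA hAcard) (le_min hA2 hAwidth),
      le_min (le_min hB hBcard) (le_min hB2 hBheight)⟩
  · rintro ⟨hA, hB⟩
    exact ⟨hA.trans ((min_le_left _ _).trans (min_le_left _ _)),
      hB.trans ((min_le_left _ _).trans (min_le_left _ _))⟩
end
end

section
/- Let r be a positive integer, w = (w₁, w₁', w₂, w₂') ∈ ℤ≥0⁴ and v = (v₁, v₂) ∈ ℤ≥0² with v₁ ≤ w₁' and v₂ ≤ w₂' + r·v₁. Then for every tuple (x₁, x₂, y₁, …, y_r) ∈ E_w with rank A ≤ v₁ and rank B ≤ v₂, there exist ℂ-subspaces X₁ ⊆ ℂ^{w₁'} and X₂ ⊆ ℂ^{w₂'} × (ℂ^{w₁'})^r with dim X₁ = v₁, dim X₂ = v₂, X₂ ⊆ ℂ^{w₂'} × X₁^{×r}, the column space of A contained in X₁, and the column space of B contained in X₂. (This is the set-theoretic surjectivity of the projection π : 𝓕̃_{v,w} → E_{v,w}.) -/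
open Matrix

noncomputable section

open Module

/-- Intermediate subspace of prescribed dimension. -/
lemma aux_between {V : Type*} [AddCommGroup V] [Module ℂ V] [FiniteDimensional ℂ V]
    (k : ℕ) : ∀ (N P : Submodule ℂ V), N ≤ P → finrank ℂ N ≤ k → k ≤ finrank ℂ P →
    ∃ M : Submodule ℂ V, N ≤ M ∧ M ≤ P ∧ finrank ℂ M = k := by
  induction k with
  | zero =>
    intro N P hNP hN _
    refine ⟨⊥, ?_, bot_le, finrank_bot ℂ V⟩
    have : N = ⊥ := Submodule.finrank_eq_zero.mp (Nat.le_zero.mp hN)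
    simp [this]
  | succ k ih =>
    intro N P hNP hN hk
    rcases Nat.lt_or_ge (finrank ℂ N) (k+1) with h | h
    · obtain ⟨M, hNM, hMP, hM⟩ := ih N P hNP (Nat.lt_succ_iff.mp h) (Nat.le_of_succ_le hk)
      have hlt : finrank ℂ M < finrank ℂ P := by omega
      have : ¬ P ≤ M := fun hle => absurd (Submodule.finrank_mono hle) (not_le.mpr hlt)
      obtain ⟨x, hxP, hxM⟩ := SetLike.not_le_iff_exists.mp this
      have hx0 : x ≠ 0 := fun h => hxM (h ▸ M.zero_mem)
      refine ⟨M ⊔ (ℂ ∙ x), le_trans hNM le_sup_left, sup_le hMP (by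
        rwa [Submodule.span_singleton_le_iff_mem]), ?_⟩
      have hinf : M ⊓ (ℂ ∙ x) = ⊥ := by
        rw [eq_bot_iff]
        rintro z ⟨hzM, hzx⟩
        obtain ⟨c, rfl⟩ := Submodule.mem_span_singleton.mp hzx
        rcases eq_or_ne c 0 with rfl | hc
        · simp
        · exact absurd ((M.smul_mem_iff hc).mp hzM) hxM
      have := Submodule.finrank_sup_add_finrank_inf_eq M (ℂ ∙ x)
      rw [hinf, finrank_bot, finrank_span_singleton hx0, hM] at this
      omega
    · exact ⟨N, le_rfl, hNP, le_antisymm hN h⟩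

lemma mem_prodSub {r w₂' w₁' : ℕ} {X₁ : Submodule ℂ (Fin w₁' → ℂ)}
    {v : Fin w₂' ⊕ Fin r × Fin w₁' → ℂ} :
    v ∈ prodSub r w₂' w₁' X₁ ↔ ∀ h : Fin r, (fun i => v (Sum.inr (h, i))) ∈ X₁ := by
  simp only [prodSub, Submodule.mem_iInf, Submodule.mem_comap, LinearMap.funLeft_apply]
  rfl

/-- The embedding of `ℂ^{w₂'} × X₁^r` into the big space. -/
def embed (r w₂' w₁' : ℕ) (X₁ : Submodule ℂ (Fin w₁' → ℂ)) :
    ((Fin w₂' → ℂ) × (Fin r → X₁)) →ₗ[ℂ] (Fin w₂' ⊕ Fin r × Fin w₁' → ℂ) where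
  toFun p := Sum.elim p.1 (fun q => (p.2 q.1 : Fin w₁' → ℂ) q.2)
  map_add' p q := by funext z; cases z <;> simp
  map_smul' c p := by funext z; cases z <;> simp

lemma embed_inj (r w₂' w₁' : ℕ) (X₁ : Submodule ℂ (Fin w₁' → ℂ)) :
    Function.Injective (embed r w₂' w₁' X₁) := by
  rw [← LinearMap.ker_eq_bot, eq_bot_iff]
  rintro ⟨a, u⟩ h
  have h' : Sum.elim a (fun q : Fin r × Fin w₁' => (u q.1 : Fin w₁' → ℂ) q.2) = 0 := h
  have ha : a = 0 := by funext i; exact congrFun h' (Sum.inl i)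
  have hu : u = 0 := by
    funext hh; ext i; exact congrFun h' (Sum.inr (hh, i))
  subst ha hu
  rfl

lemma embed_range (r w₂' w₁' : ℕ) (X₁ : Submodule ℂ (Fin w₁' → ℂ)) :
    LinearMap.range (embed r w₂' w₁' X₁) = prodSub r w₂' w₁' X₁ := by
  ext v
  constructor
  · rintro ⟨⟨a, u⟩, rfl⟩
    rw [mem_prodSub]
    intro h
    exact (u h).2
  · intro hv
    rw [mem_prodSub] at hv
    refine ⟨⟨fun i => v (Sum.inl i), fun h => ⟨fun i => v (Sum.inr (h, i)), hv h⟩⟩, ?_⟩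
    funext z; cases z <;> rfl

lemma finrank_prodSub (r w₂' w₁' : ℕ) (X₁ : Submodule ℂ (Fin w₁' → ℂ)) :
    finrank ℂ (prodSub r w₂' w₁' X₁) = w₂' + r * finrank ℂ X₁ := by
  rw [← embed_range, LinearMap.finrank_range_of_inj (embed_inj r w₂' w₁' X₁),
    Module.finrank_prod, Module.finrank_pi_fintype]
  have : finrank ℂ (Fin r → X₁) = r * finrank ℂ X₁ := by
    rw [Module.finrank_pi_fintype ℂ (M := fun _ : Fin r => X₁)]
    simp [Finset.sum_const]
  simp [this, Finset.sum_const]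

theorem stmt_5 (r w₁ w₁' w₂ w₂' v₁ v₂ : ℕ) (hr : 0 < r)
    (hv₁ : v₁ ≤ w₁') (hv₂ : v₂ ≤ w₂' + r * v₁)
    (x₁ : Matrix (Fin w₁') (Fin w₁) ℂ) (x₂ : Matrix (Fin w₂') (Fin w₂) ℂ)
    (y : Fin r → Matrix (Fin w₁') (Fin w₂) ℂ)
    (hA : (matA x₁ y).rank ≤ v₁) (hB : (matB x₂ y).rank ≤ v₂) :
    ∃ (X₁ : Submodule ℂ (Fin w₁' → ℂ))
      (X₂ : Submodule ℂ (Fin w₂' ⊕ Fin r × Fin w₁' → ℂ)),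
      Module.finrank ℂ X₁ = v₁ ∧ Module.finrank ℂ X₂ = v₂ ∧
      X₂ ≤ prodSub r w₂' w₁' X₁ ∧
      LinearMap.range (matA x₁ y).mulVecLin ≤ X₁ ∧
      LinearMap.range (matB x₂ y).mulVecLin ≤ X₂ := by
  have hAfin : finrank ℂ (LinearMap.range (matA x₁ y).mulVecLin) ≤ v₁ := hA
  have hBfin : finrank ℂ (LinearMap.range (matB x₂ y).mulVecLin) ≤ v₂ := hB
  obtain ⟨X₁, hRA, -, hX₁⟩ := aux_between v₁ (LinearMap.range (matA x₁ y).mulVecLin) ⊤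
    le_top hAfin (by simpa using hv₁)
  have hRB : LinearMap.range (matB x₂ y).mulVecLin ≤ prodSub r w₂' w₁' X₁ := by
    rintro v ⟨c, rfl⟩
    rw [mem_prodSub]
    intro h
    have key : (fun i => (matB x₂ y).mulVecLin c (Sum.inr (h, i)))
        = (matA x₁ y).mulVecLin (Sum.elim 0 fun p : Fin r × Fin w₂ =>
            if p.1 = h then c p.2 else 0) := by
      funext i
      simp [matA, matB, Matrix.mulVecLin_apply, Matrix.mulVec, dotProduct,
        Fintype.sum_sum_type, Fintype.sum_prod_type, mul_ite, mul_zero,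
        Finset.sum_ite_eq', Finset.sum_ite_eq]
    rw [key]
    exact hRA ⟨_, rfl⟩
  obtain ⟨X₂, hRB₂, hX₂sub, hX₂⟩ := aux_between v₂ (LinearMap.range (matB x₂ y).mulVecLin)
    (prodSub r w₂' w₁' X₁) hRB hBfin (by rw [finrank_prodSub, hX₁]; exact hv₂)
  exact ⟨X₁, X₂, hX₁, hX₂, hX₂sub, hRA, hRB₂⟩
end
end

section
/- Let r be a positive integer, w = (w₁, w₁', w₂, w₂') ∈ ℤ≥0⁴, and let v = (v₁,v₂), v' = (v₁',v₂') ∈ ℤ≥0² be such that (v, w) and (v', w) are both l-dominant, v₁' ≤ v₁, v₂' ≤ v₂, and v' ≠ v. Then, in ℤ, v₂'·(w₂ + w₂' + r·v₁' − v₂') + v₁'·(w₁ + w₁' − v₁') + (v₂ − v₂')·(w₂' + r·v₁ − v₂) + (v₁ − v₁')·(w₁' − v₁) ≤ v₂·(w₂ + w₂' + r·v₁ − v₂) + v₁·(w₁ + w₁' − v₁) − 1. (The left-hand side is the dimension of the preimage under π of the stratum E°_{v',w} inside 𝓕̃_{v,w}, and the right-hand side is dim 𝓕̃_{v,w} − 1;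 this is the codimension estimate used to prove simple connectedness of E°_{v,w}.) -/
theorem stmt_11 (r w₁ w₁' w₂ w₂' v₁ v₂ v₁' v₂' : ℕ) (hr : 0 < r)
    (hv : LDominant r w₁ w₁' w₂ w₂' v₁ v₂)
    (hv' : LDominant r w₁ w₁' w₂ w₂' v₁' v₂')
    (h₁ : v₁' ≤ v₁) (h₂ : v₂' ≤ v₂) (hne : (v₁', v₂') ≠ (v₁, v₂)) :
    (v₂' : ℤ) * ((w₂ : ℤ) + (w₂' : ℤ) + (r : ℤ) * (v₁' : ℤ) - (v₂' : ℤ))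
      + (v₁' : ℤ) * ((w₁ : ℤ) + (w₁' : ℤ) - (v₁' : ℤ))
      + ((v₂ : ℤ) - (v₂' : ℤ)) * ((w₂' : ℤ) + (r : ℤ) * (v₁ : ℤ) - (v₂ : ℤ))
      + ((v₁ : ℤ) - (v₁' : ℤ)) * ((w₁' : ℤ) - (v₁ : ℤ))
    ≤ (v₂ : ℤ) * ((w₂ : ℤ) + (w₂' : ℤ) + (r : ℤ) * (v₁ : ℤ) - (v₂ : ℤ))
      + (v₁ : ℤ) * ((w₁ : ℤ) + (w₁' : ℤ) - (v₁ : ℤ)) - 1 := by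
  obtain ⟨ha1, ha2, ha3, ha4⟩ := hv
  obtain ⟨hb1, hb2, hb3, hb4⟩ := hv'
  rcases eq_or_lt_of_le h₂ with he | hlt
  · -- v₂' = v₂, so v₁' < v₁
    have hlt1 : v₁' < v₁ := by
      rcases eq_or_lt_of_le h₁ with he1 | h
      · exact absurd (by simp [he1, he]) hne
      · exact h
    subst he
    have : (v₁' : ℤ) + 1 ≤ v₁ := by exact_mod_cast hlt1
    have hc : (v₁ : ℤ) ≤ w₁ + r * v₂' := by exact_mod_cast ha1
    have hw2 : (v₂' : ℤ) ≤ w₂ := by exact_mod_cast hb3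
    nlinarith [sub_nonneg.mpr this]
  · have hw2 : (v₂ : ℤ) ≤ w₂ := by exact_mod_cast ha3
    have hlt' : (v₂' : ℤ) + 1 ≤ v₂ := by exact_mod_cast hlt
    have hw1 : (v₁' : ℤ) ≤ w₁ + r * v₂' := by exact_mod_cast hb1
    have h1z : (v₁' : ℤ) ≤ v₁ := by exact_mod_cast h₁
    have hrz : (1 : ℤ) ≤ r := by exact_mod_cast hr
    nlinarith [mul_nonneg (sub_nonneg.mpr h1z) (sub_nonneg.mpr hw1)]
end

section
/- Let r be a positive integer and w₁, w₁', w₂, w₂', v₁, v₂ nonnegative integers with v₁ ≤ w₁' and v₂ ≤ w₂. Fix ℂ-subspaces X₁ ⊆ ℂ^{w₁'} with dim X₁ = v₁ and X₂' ⊆ ℂ^{w₂} with dim X₂' = v₂. Then the set of tuples (x₁, x₂, y₁, …, y_r) ∈ E_w such that every column of x₁ and of each y_h lies in X₁, and every row of x₂ and of each y_h (regarded as a vector in ℂ^{w₂}) lies in X₂', is a ℂ-linear subspace of E_w of dimension w₁·v₁ + w₂'·v₂ + r·v₁·v₂. (This computes the fiber of the vector bundle 𝓖̃_{v,w} → Gr(v₁,w₁')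 × Gr(v₂,w₂).) -/
open Matrix

noncomputable section

/-- The matrix whose columns are a basis of a subspace of `ℂ^m`. -/
def basisMatrix {m v : ℕ} (X : Submodule ℂ (Fin m → ℂ)) (b : Module.Basis (Fin v) ℂ X) :
    Matrix (Fin m) (Fin v) ℂ :=
  Matrix.of fun i k => (b k : Fin m → ℂ) i

lemma ker_basisMatrix {m v : ℕ} (X : Submodule ℂ (Fin m → ℂ)) (b : Module.Basis (Fin v) ℂ X) :
    LinearMap.ker (basisMatrix X b).mulVecLin = ⊥ := by
  rw [LinearMap.ker_eq_bot']
  intro c hc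
  have hb : LinearIndependent ℂ (fun k => (b k : Fin m → ℂ)) :=
    b.linearIndependent.map' X.subtype X.ker_subtype
  have h2 : ∑ k, c k • (b k : Fin m → ℂ) = 0 := by
    funext i
    have := congrFun hc i
    simpa [basisMatrix, Matrix.mulVecLin, Matrix.mulVec, dotProduct, Finset.sum_apply,
      mul_comm] using this
  exact funext fun k => Fintype.linearIndependent_iff.mp hb c h2 k

lemma exists_leftInv {m v : ℕ} (P : Matrix (Fin m) (Fin v) ℂ)
    (h : LinearMap.ker P.mulVecLin = ⊥) :
    ∃ L : Matrix (Fin v) (Fin m) ℂ, L * P = 1 := by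
  obtain ⟨g, hg⟩ := P.mulVecLin.exists_leftInverse_of_injective h
  refine ⟨LinearMap.toMatrix' g, ?_⟩
  have h1 : LinearMap.toMatrix' P.mulVecLin = P := by
    rw [← Matrix.toLin'_apply', LinearMap.toMatrix'_toLin']
  calc LinearMap.toMatrix' g * P
      = LinearMap.toMatrix' (g ∘ₗ P.mulVecLin) := by rw [LinearMap.toMatrix'_comp, h1]
    _ = 1 := by rw [hg, LinearMap.toMatrix'_id]

lemma col_mem {m n v : ℕ} (X : Submodule ℂ (Fin m → ℂ)) (b : Module.Basis (Fin v) ℂ X)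
    (Z : Matrix (Fin v) (Fin n) ℂ) (j : Fin n) :
    (fun i => (basisMatrix X b * Z) i j) ∈ X := by
  have h : (fun i => (basisMatrix X b * Z) i j) = ∑ k, Z k j • ((b k : Fin m → ℂ)) := by
    funext i
    simp [basisMatrix, Matrix.mul_apply, Finset.sum_apply, mul_comm]
  rw [h]
  exact Submodule.sum_mem _ fun k _ => X.smul_mem _ (b k).2

lemma row_mem {m n v : ℕ} (X : Submodule ℂ (Fin n → ℂ)) (b : Module.Basis (Fin v) ℂ X)
    (Z : Matrix (Fin m) (Fin v) ℂ) (i : Fin m) :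
    (fun j => (Z * (basisMatrix X b)ᵀ) i j) ∈ X := by
  have h : (fun j => (Z * (basisMatrix X b)ᵀ) i j) = ∑ k, Z i k • ((b k : Fin n → ℂ)) := by
    funext j
    simp [basisMatrix, Matrix.mul_apply, Finset.sum_apply]
  rw [h]
  exact Submodule.sum_mem _ fun k _ => X.smul_mem _ (b k).2

lemma col_factor {m n v : ℕ} (X : Submodule ℂ (Fin m → ℂ)) (b : Module.Basis (Fin v) ℂ X)
    (M : Matrix (Fin m) (Fin n) ℂ) (h : ∀ j, (fun i => M i j) ∈ X) :
    ∃ Z : Matrix (Fin v) (Fin n) ℂ, basisMatrix X b * Z = M := by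
  refine ⟨Matrix.of fun k j => b.repr ⟨fun i => M i j, h j⟩ k, ?_⟩
  ext i j
  have hs := congrArg (fun x : X => (x : Fin m → ℂ) i) (b.sum_repr ⟨fun i => M i j, h j⟩)
  simp only at hs
  rw [Matrix.mul_apply]
  simp only [basisMatrix, Matrix.of_apply]
  rw [← hs]
  simp [Finset.sum_apply, mul_comm, -Module.Basis.sum_repr]

lemma row_factor {m n v : ℕ} (X : Submodule ℂ (Fin n → ℂ)) (b : Module.Basis (Fin v) ℂ X)
    (M : Matrix (Fin m) (Fin n) ℂ) (h : ∀ i, (fun j => M i j) ∈ X) :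
    ∃ Z : Matrix (Fin m) (Fin v) ℂ, Z * (basisMatrix X b)ᵀ = M := by
  obtain ⟨Z, hZ⟩ := col_factor X b Mᵀ (fun i => h i)
  exact ⟨Zᵀ, by rw [← Matrix.transpose_mul, hZ, Matrix.transpose_transpose]⟩

theorem stmt_12 (r w₁ w₁' w₂ w₂' v₁ v₂ : ℕ) (hr : 0 < r)
    (hv₁ : v₁ ≤ w₁') (hv₂ : v₂ ≤ w₂)
    (X₁ : Submodule ℂ (Fin w₁' → ℂ)) (hX₁ : Module.finrank ℂ X₁ = v₁)
    (X₂' : Submodule ℂ (Fin w₂ → ℂ)) (hX₂ : Module.finrank ℂ X₂' = v₂) :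
    ∃ S : Submodule ℂ (EW r w₁ w₁' w₂ w₂'),
      (S : Set (EW r w₁ w₁' w₂ w₂')) =
        {p | (∀ j, (fun i => p.1 i j) ∈ X₁) ∧
             (∀ h j, (fun i => p.2.2 h i j) ∈ X₁) ∧
             (∀ i, (fun j => p.2.1 i j) ∈ X₂') ∧
             (∀ h i, (fun j => p.2.2 h i j) ∈ X₂')} ∧
      Module.finrank ℂ S = w₁ * v₁ + w₂' * v₂ + r * v₁ * v₂ := by
  classical
  let b₁ : Module.Basis (Fin v₁) ℂ X₁ := Module.finBasisOfFinrankEq ℂ X₁ hX₁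
  let b₂ : Module.Basis (Fin v₂) ℂ X₂' := Module.finBasisOfFinrankEq ℂ X₂' hX₂
  set P : Matrix (Fin w₁') (Fin v₁) ℂ := basisMatrix X₁ b₁ with hP
  set Q : Matrix (Fin v₂) (Fin w₂) ℂ := (basisMatrix X₂' b₂)ᵀ with hQ
  obtain ⟨L, hL⟩ := exists_leftInv P (ker_basisMatrix X₁ b₁)
  obtain ⟨L', hL'⟩ := exists_leftInv (basisMatrix X₂' b₂) (ker_basisMatrix X₂' b₂)
  set R : Matrix (Fin w₂) (Fin v₂) ℂ := L'ᵀ with hR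
  have hQR : Q * R = 1 := by
    have := congrArg Matrix.transpose hL'
    simpa [Matrix.transpose_mul] using this
  let Φ : (Matrix (Fin v₁) (Fin w₁) ℂ × Matrix (Fin w₂') (Fin v₂) ℂ ×
      (Fin r → Matrix (Fin v₁) (Fin v₂) ℂ)) →ₗ[ℂ] EW r w₁ w₁' w₂ w₂' :=
    { toFun := fun Z => (P * Z.1, Z.2.1 * Q, fun h => P * Z.2.2 h * Q)
      map_add' := by
        intro a b
        refine Prod.ext ?_ (Prod.ext ?_ ?_)
        · simp [Matrix.mul_add]
        · simp [Matrix.add_mul]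
        · funext h; simp [Matrix.mul_add, Matrix.add_mul]
      map_smul' := by
        intro c a
        refine Prod.ext ?_ (Prod.ext ?_ ?_)
        · simp [Matrix.mul_smul]
        · simp [Matrix.smul_mul]
        · funext h; simp [Matrix.mul_smul, Matrix.smul_mul] }
  refine ⟨LinearMap.range Φ, ?_, ?_⟩
  · ext p
    simp only [SetLike.mem_coe, LinearMap.mem_range, Set.mem_setOf_eq]
    constructor
    · rintro ⟨⟨Z₁, Z₂, Z⟩, rfl⟩
      refine ⟨fun j => col_mem X₁ b₁ Z₁ j, fun h j => ?_, fun i => row_mem X₂' b₂ Z₂ i,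
        fun h i => row_mem X₂' b₂ (P * Z h) i⟩
      have : P * Z h * Q = P * (Z h * Q) := Matrix.mul_assoc _ _ _
      show (fun i => (P * Z h * Q) i j) ∈ X₁
      rw [this]
      exact col_mem X₁ b₁ (Z h * Q) j
    · rintro ⟨h1, h2, h3, h4⟩
      obtain ⟨Z₁, hZ₁⟩ := col_factor X₁ b₁ p.1 h1
      obtain ⟨Z₂, hZ₂⟩ := row_factor X₂' b₂ p.2.1 h3
      choose Z' hZ' using fun h => col_factor X₁ b₁ (p.2.2 h) (h2 h)
      have hZ'eq : ∀ h, Z' h = L * p.2.2 h := by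
        intro h
        calc Z' h = (L * P) * Z' h := by rw [hL, Matrix.one_mul]
          _ = L * (P * Z' h) := Matrix.mul_assoc _ _ _
          _ = L * p.2.2 h := by rw [hZ' h]
      have hrows : ∀ h i, (fun j => Z' h i j) ∈ X₂' := by
        intro h i
        rw [hZ'eq h]
        have he : (fun j => (L * p.2.2 h) i j) = ∑ k, L i k • (fun j => p.2.2 h k j) := by
          funext j
          simp [Matrix.mul_apply, Finset.sum_apply]
        rw [he]
        exact Submodule.sum_mem _ fun k _ => X₂'.smul_mem _ (h4 h k)
      choose Z hZ using fun h => row_factor X₂' b₂ (Z' h) (hrows h)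
      refine ⟨⟨Z₁, Z₂, Z⟩, ?_⟩
      refine Prod.ext hZ₁ (Prod.ext hZ₂ ?_)
      funext h
      show P * Z h * Q = p.2.2 h
      rw [Matrix.mul_assoc, hZ h, hZ' h]
  · have hinj : Function.Injective Φ := by
      rw [← LinearMap.ker_eq_bot, LinearMap.ker_eq_bot']
      rintro ⟨Z₁, Z₂, Z⟩ hz
      have e1 : P * Z₁ = 0 := congrArg Prod.fst hz
      have e2 : Z₂ * Q = 0 := congrArg (fun x => x.2.1) hz
      have e3 : ∀ h, P * Z h * Q = 0 := fun h => congrFun (congrArg (fun x => x.2.2) hz) h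
      have f1 : Z₁ = 0 := by
        calc Z₁ = (L * P) * Z₁ := by rw [hL, Matrix.one_mul]
          _ = L * (P * Z₁) := Matrix.mul_assoc _ _ _
          _ = 0 := by rw [e1, Matrix.mul_zero]
      have f2 : Z₂ = 0 := by
        calc Z₂ = Z₂ * (Q * R) := by rw [hQR, Matrix.mul_one]
          _ = (Z₂ * Q) * R := (Matrix.mul_assoc _ _ _).symm
          _ = 0 := by rw [e2, Matrix.zero_mul]
      have f3 : Z = 0 := by
        funext h
        have key : L * (P * Z h * Q) * R = Z h := by
          rw [show P * Z h * Q = P * (Z h * Q) from Matrix.mul_assoc _ _ _,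
            ← Matrix.mul_assoc L P (Z h * Q), hL, Matrix.one_mul,
            Matrix.mul_assoc (Z h) Q R, hQR, Matrix.mul_one]
        have : Z h = 0 := by rw [← key, e3 h, Matrix.mul_zero, Matrix.zero_mul]
        simpa using this
      simp [f1, f2, f3]
    rw [LinearMap.finrank_range_of_inj hinj]
    simp only [Module.finrank_prod, Module.finrank_pi_fintype, Module.finrank_matrix,
      Module.finrank_self, Fintype.card_fin, Finset.sum_const, Finset.card_univ, smul_eq_mul,
      mul_one]
    ring
end
end

section
/- Let r be a positive integer and w = (w₁, w₁', w₂, w₂') ∈ ℤ≥0⁴. Fix ℂ-subspaces X₁ ⊆ ℂ^{w₁'} with dim X₁ = v₁ and X₂ ⊆ ℂ^{w₂'} × (ℂ^{w₁'})^r with dim X₂ = v₂ and X₂ ⊆ ℂ^{w₂'} × X₁^{×r}. Then the set of tuples (x₁, x₂, y₁, …, y_r) ∈ E_w such that the column space of A is contained in X₁ and the column space of B is contained in X₂ is a ℂ-linear subspace of E_w of dimension w₁·v₁ + w₂·v₂. (This computes the fiber of the vector bundle 𝓕̃_{v,w} → 𝓕_{v,w}.) -/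
open Matrix

noncomputable section

theorem stmt_13 (r w₁ w₁' w₂ w₂' v₁ v₂ : ℕ) (hr : 0 < r)
    (X₁ : Submodule ℂ (Fin w₁' → ℂ)) (hX₁ : Module.finrank ℂ X₁ = v₁)
    (X₂ : Submodule ℂ (Fin w₂' ⊕ Fin r × Fin w₁' → ℂ)) (hX₂ : Module.finrank ℂ X₂ = v₂)
    (hsub : X₂ ≤ prodSub r w₂' w₁' X₁) :
    ∃ S : Submodule ℂ (EW r w₁ w₁' w₂ w₂'),
      (S : Set (EW r w₁ w₁' w₂ w₂')) =
        {p | LinearMap.range (matA p.1 p.2.2).mulVecLin ≤ X₁ ∧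
             LinearMap.range (matB p.2.1 p.2.2).mulVecLin ≤ X₂} ∧
      Module.finrank ℂ S = w₁ * v₁ + w₂ * v₂ := by
  classical
  -- the assembly map
  set D := (Fin w₁ → X₁) × (Fin w₂ → X₂) with hD
  let L : D →ₗ[ℂ] EW r w₁ w₁' w₂ w₂' :=
    { toFun := fun cd =>
        (Matrix.of fun i j => (cd.1 j : Fin w₁' → ℂ) i,
         Matrix.of fun i j => (cd.2 j : Fin w₂' ⊕ Fin r × Fin w₁' → ℂ) (Sum.inl i),
         fun h => Matrix.of fun i j =>
           (cd.2 j : Fin w₂' ⊕ Fin r × Fin w₁' → ℂ) (Sum.inr (h, i)))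
      map_add' := by intro a b; rfl
      map_smul' := by intro c a; rfl }
  have hinj : Function.Injective L := by
    rw [← LinearMap.ker_eq_bot, LinearMap.ker_eq_bot']
    intro cd h
    have h1 := congrArg Prod.fst h
    have h2 := congrArg (fun p => p.2.1) h
    have h3 := congrArg (fun p => p.2.2) h
    ext j i
    · exact congrFun (congrFun h1 i) j
    · rcases i with i | ⟨hh, i⟩
      · exact congrFun (congrFun h2 i) j
      · exact congrFun (congrFun (congrFun h3 hh) i) j
  refine ⟨LinearMap.range L, ?_, ?_⟩
  · ext p
    simp only [SetLike.mem_coe, LinearMap.mem_range, Set.mem_setOf_eq]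
    constructor
    · rintro ⟨cd, rfl⟩
      constructor
      · rw [Matrix.range_mulVecLin, Submodule.span_le]
        rintro _ ⟨k, rfl⟩
        rcases k with j | ⟨h, b⟩
        · exact (cd.1 j).2
        · have := hsub (cd.2 b).2
          rw [prodSub, Submodule.mem_iInf] at this
          exact this h
      · rw [Matrix.range_mulVecLin, Submodule.span_le]
        rintro _ ⟨j, rfl⟩
        have : (matB (L cd).2.1 (L cd).2.2).col j = (cd.2 j : Fin w₂' ⊕ Fin r × Fin w₁' → ℂ) := by
          funext k
          rcases k with i | ⟨h, i⟩ <;> rfl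
        rw [this]
        exact (cd.2 j).2
    · rintro ⟨hA, hB⟩
      rw [Matrix.range_mulVecLin, Submodule.span_le] at hA hB
      refine ⟨(fun j => ⟨fun i => p.1 i j, hA ⟨Sum.inl j, rfl⟩⟩,
              fun j => ⟨fun k => matB p.2.1 p.2.2 k j, hB ⟨j, rfl⟩⟩), ?_⟩
      rfl
  · rw [LinearMap.finrank_range_of_inj hinj]
    have : Module.finrank ℂ D =
        Module.finrank ℂ (Fin w₁ → X₁) + Module.finrank ℂ (Fin w₂ → X₂) :=
      Module.finrank_prod
    rw [this, Module.finrank_pi_fintype, Module.finrank_pi_fintype]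
    simp [hX₁, hX₂, mul_comm]
end
end

section
/- Let r ≥ 2 be an integer and let w₁', w₂ be positive real numbers with w₁'² − r·w₁'·w₂ + w₂² ≤ 0. Let v₁, v₂, y be real numbers satisfying 0 ≤ y ≤ v₂, r·y ≥ v₁, v₁ ≤ w₁', y ≤ w₂, r·v₁ ≥ y, (v₁, y) ≠ (0, 0), and −v₁² + r·v₁·v₂ − v₂² + w₁'·v₁ − w₂·v₂ ≥ 0. Then D₁ ≥ 0 or D₄ > 0, where D₁ = (v₁² − r·v₁·y + y²) + (w₁' − 2·v₁)·v₁ + (2·r·v₁ − 2·v₂ − w₂)·y and D₄ = 2·(y² + (r·v₁ − v₂ − w₂)·y). -/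
theorem stmt_15 (r : ℤ) (hr : 2 ≤ r) (w₁' w₂ v₁ v₂ y : ℝ)
    (hw₁' : 0 < w₁') (hw₂ : 0 < w₂)
    (him : w₁' ^ 2 - (r : ℝ) * w₁' * w₂ + w₂ ^ 2 ≤ 0)
    (hy0 : 0 ≤ y) (hyv : y ≤ v₂)
    (h1 : v₁ ≤ (r : ℝ) * y) (h2 : v₁ ≤ w₁')
    (h3 : y ≤ w₂) (h4 : y ≤ (r : ℝ) * v₁)
    (h5 : (v₁, y) ≠ (0, 0))
    (hF : 0 ≤ -v₁ ^ 2 + (r : ℝ) * v₁ * v₂ - v₂ ^ 2 + w₁' * v₁ - w₂ * v₂) :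
    0 ≤ (v₁ ^ 2 - (r : ℝ) * v₁ * y + y ^ 2) + (w₁' - 2 * v₁) * v₁
        + (2 * (r : ℝ) * v₁ - 2 * v₂ - w₂) * y ∨
    0 < 2 * (y ^ 2 + ((r : ℝ) * v₁ - v₂ - w₂) * y) := by
  have hr' : (2 : ℝ) ≤ (r : ℝ) := by exact_mod_cast hr
  rcases eq_or_lt_of_le hy0 with hy | hy
  · left
    have hv1 : 0 ≤ v₁ := by nlinarith
    nlinarith
  · by_cases hc : 0 ≤ v₂ + w₂ - y - (r : ℝ) * v₁
    · left
      nlinarith [mul_nonneg (sub_nonneg.mpr hyv) hc]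
    · right
      push_neg at hc
      nlinarith
end
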